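/- Let ψ be an adjoint solution of the 2-D Euler adjoint equation on both sides of a shock Σ with [ψ] = 0 and [∂_tψ] = 0 along Σ. Then the jump of the adjoint normal derivatives satisfies [v_n ∂_nψ₁] − H[v_n ∂_nψ₄] = 0, where H is the (continuous) total enthalpy at the shock. -/
import Mathlib


/-- The 2-D Euler flux Jacobian in the direction `(nx, ny)`:  `An γ u v H nx ny = nx • A + ny • B`,
where `A`, `B` are the Jacobians of the Euler fluxes w.r.t. conservative variables. -/
noncomputable def An (γ u v H nx ny : ℝ) : Matrix (Fin 4) (Fin 4) ℝ :=
  !![0, nx, ny, 0;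
     (γ-1)*((u^2+v^2)/2)*nx - u*(u*nx+v*ny), (u*nx+v*ny)-(γ-2)*u*nx, u*ny-(γ-1)*v*nx, (γ-1)*nx;
     (γ-1)*((u^2+v^2)/2)*ny - v*(u*nx+v*ny), v*nx-(γ-1)*u*ny, (u*nx+v*ny)-(γ-2)*v*ny, (γ-1)*ny;
     ((γ-1)*((u^2+v^2)/2)-H)*(u*nx+v*ny), H*nx-(γ-1)*u*(u*nx+v*ny), H*ny-(γ-1)*v*(u*nx+v*ny), γ*(u*nx+v*ny)]

/- Across a Rankine–Hugoniot shock, with the adjoint ψ and its tangential derivative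
continuous, the adjoint normal derivatives satisfy [vₙ ∂ₙψ₁] − H [vₙ ∂ₙψ₄] = 0.
Dnp/Dnm are the one-sided normal derivative vectors of ψ, Dt the common tangential
derivative; the velocity on each side is vₙ n + v_t t with t = (−n_y, n_x). -/
theorem adjoint_shock_jump_relation_1 (γ H vt nx ny vnp vnm ρp ρm : ℝ)
    (Dnp Dnm Dt : Fin 4 → ℝ)
    (hγ : 1 < γ) (hn : nx^2 + ny^2 = 1)
    (hρp : 0 < ρp) (hρm : 0 < ρm)
    (hmass : ρp * vnp = ρm * vnm)
    (hadjp : (An γ (vnp*nx - vt*ny) (vnp*ny + vt*nx) H nx ny).transpose.mulVec Dnp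
           + (An γ (vnp*nx - vt*ny) (vnp*ny + vt*nx) H (-ny) nx).transpose.mulVec Dt = 0)
    (hadjm : (An γ (vnm*nx - vt*ny) (vnm*ny + vt*nx) H nx ny).transpose.mulVec Dnm
           + (An γ (vnm*nx - vt*ny) (vnm*ny + vt*nx) H (-ny) nx).transpose.mulVec Dt = 0) :
    (vnp * Dnp 0 - vnm * Dnm 0) - H * (vnp * Dnp 3 - vnm * Dnm 3) = 0 := by

  have ep : ∀ i, ((An γ (vnp*nx - vt*ny) (vnp*ny + vt*nx) H nx ny).transpose.mulVec Dnp
           + (An γ (vnp*nx - vt*ny) (vnp*ny + vt*nx) H (-ny) nx).transpose.mulVec Dt) i = 0 := by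
    intro i; rw [hadjp]; rfl
  have em : ∀ i, ((An γ (vnm*nx - vt*ny) (vnm*ny + vt*nx) H nx ny).transpose.mulVec Dnm
           + (An γ (vnm*nx - vt*ny) (vnm*ny + vt*nx) H (-ny) nx).transpose.mulVec Dt) i = 0 := by
    intro i; rw [hadjm]; rfl
  have ep0 := ep 0; have ep1 := ep 1; have ep2 := ep 2
  have em0 := em 0; have em1 := em 1; have em2 := em 2
  simp only [Pi.add_apply, Matrix.mulVec, dotProduct, Fin.sum_univ_four,
    Matrix.transpose_apply, Pi.zero_apply] at ep0 ep1 ep2 em0 em1 em2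
  simp only [An, Matrix.of_apply, Matrix.cons_val_zero, Matrix.cons_val_one,
    Matrix.head_cons, Matrix.cons_val_two, Matrix.cons_val_three,
    Matrix.tail_cons] at ep0 ep1 ep2 em0 em1 em2
  linear_combination (2:ℝ) * ep0 + (vnp*nx - vt*ny) * ep1 + (vnp*ny + vt*nx) * ep2
    - 2 * em0 - (vnm*nx - vt*ny) * em1 - (vnm*ny + vt*nx) * em2
    + (vnm * Dnm 0 - vnp * Dnp 0 - H * vnm * Dnm 3 + H * vnp * Dnp 3) * hn
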